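/- There exists an approval profile and committee that is Lindahl priceable but not priceable: with n = 5 voters, k = 2, candidates {a,b,d}, approval sets A_1 = {a} and A_i = {b,d} for i ∈ {2,3,4,5}, the committee W = {a,b} is Lindahl priceable (witnessed by prices p[i,b] = 0.6 and p[i,d] = 0.5 for i ≠ 1, zero otherwise) but not priceable in the sense of Peters–Skowron. -/
import Mathlib


/-- The profile of Proposition `lindnotpble`: 5 voters over candidates
`{a, b, d} = {0, 1, 2}`, with `A_1 = {a}` and `A_i = {b, d}` for `i ≠ 1`. -/
def P13 : Fin 5 → Finset (Fin 3) := fun i => if i = 0 then {0} else {1, 2}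

/-- the committee `W = {a, b}` (for `k = 2`) is Lindahl priceable
but not priceable in the sense of Peters–Skowron. -/
theorem stmt13 :
    (∃ p : Fin 5 → Fin 3 → ℚ,
      (∀ i c, 0 ≤ p i c) ∧
      (∀ c, (∑ i, p i c) ≤ (5 : ℚ) / 2) ∧
      (∀ (i : Fin 5) (T : Finset (Fin 3)),
        (P13 i ∩ ({0, 1} : Finset (Fin 3))).card < (P13 i ∩ T).card →
          1 < ∑ c ∈ T, p i c)) ∧
    ¬ (∃ (r : ℚ) (f : Fin 5 → Fin 3 → ℚ), 0 < r ∧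
      (∀ i c, 0 ≤ f i c ∧ f i c ≤ 1) ∧
      (∀ i c, 0 < f i c → c ∈ P13 i) ∧
      (∀ i, (∑ c, f i c) ≤ 1) ∧
      (∀ c ∈ ({0, 1} : Finset (Fin 3)), (∑ i, f i c) = r) ∧
      (∀ c ∉ ({0, 1} : Finset (Fin 3)), (∑ i, f i c) = 0) ∧
      (∀ c ∉ ({0, 1} : Finset (Fin 3)),
        (∑ i ∈ Finset.univ.filter (fun i => c ∈ P13 i),
          (1 - ∑ c' ∈ ({0, 1} : Finset (Fin 3)), f i c')) ≤ r)) := by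
  constructor
  · refine ⟨fun i c => if i = 0 then 0 else if c = 1 then 3/5 else if c = 2 then 1/2 else 0,
      ?_, ?_, ?_⟩
    · intro i c
      dsimp only
      split <;> [norm_num; skip]
      split <;> [norm_num; skip]
      split <;> norm_num
    · intro c
      fin_cases c <;> simp [Fin.sum_univ_five] <;> norm_num
    · intro i T h
      fin_cases i <;> fin_cases T <;>
        simp_all [P13, Finset.sum_insert, Finset.inter_comm] <;> norm_num
  · rintro ⟨r, f, hr, hb, hsup, hbud, hW, hnW, hc5⟩
    have h10 : f 1 0 = 0 := by
      by_contra h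
      have := hsup 1 0 (lt_of_le_of_ne (hb 1 0).1 (Ne.symm h))
      simp [P13] at this
    have h20 : f 2 0 = 0 := by
      by_contra h
      have := hsup 2 0 (lt_of_le_of_ne (hb 2 0).1 (Ne.symm h))
      simp [P13] at this
    have h30 : f 3 0 = 0 := by
      by_contra h
      have := hsup 3 0 (lt_of_le_of_ne (hb 3 0).1 (Ne.symm h))
      simp [P13] at this
    have h40 : f 4 0 = 0 := by
      by_contra h
      have := hsup 4 0 (lt_of_le_of_ne (hb 4 0).1 (Ne.symm h))
      simp [P13] at this
    have h01 : f 0 1 = 0 := by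
      by_contra h
      have := hsup 0 1 (lt_of_le_of_ne (hb 0 1).1 (Ne.symm h))
      simp [P13] at this
    have hW0 := hW 0 (by decide)
    have hW1 := hW 1 (by decide)
    rw [Fin.sum_univ_five] at hW0 hW1
    have hbud0 := hbud 0
    rw [Fin.sum_univ_three] at hbud0
    have h02 : 0 ≤ f 0 2 := (hb 0 2).1
    have h5 := hc5 2 (by decide)
    have hfil : (Finset.univ.filter (fun i => (2 : Fin 3) ∈ P13 i)) =
        ({1, 2, 3, 4} : Finset (Fin 5)) := by decide
    rw [hfil] at h5
    rw [show ({1,2,3,4}:Finset (Fin 5)) = {1} ∪ {2} ∪ {3} ∪ {4} by decide] at h5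
    rw [Finset.sum_union (by decide), Finset.sum_union (by decide),
      Finset.sum_union (by decide)] at h5
    simp only [Finset.sum_singleton, Finset.sum_insert (by decide : (0:Fin 3) ∉ ({1}:Finset (Fin 3))), Finset.sum_singleton] at h5
    linarith
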